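/- Let 0 < a < b, ℓ > 0, and let κ : ℝ → ℝ be continuous, nonnegative, vanishing outside (a,b), with ∫_a^b κ(x) dx = 1 and κ(x) ≤ 2/(ℓ x) for every x > 0. Define f(z) = ∫_0^{|z|} (∫_0^y κ(x) dx) dy. Let h : ℝ → ℝ be a function such that x ↦ x + h(x) is nondecreasing. Then for all x ≠ y, setting l = h(x) − h(y), one has f(x−y+l) − f(x−y) − f'(x−y)·l ≤ (2/ℓ) ∫_0^1 l²(1−u)/|x−y+ul| du ≤ 2 l² / (ℓ |x−y|). -/

import Mathlib

open Real MeasureTheory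

theorem stmt_3 (a b ℓ : ℝ) (ha : 0 < a) (hab : a < b) (hℓ : 0 < ℓ)
    (κ : ℝ → ℝ) (hκc : Continuous κ) (hκ0 : ∀ x, 0 ≤ κ x)
    (hκsupp : ∀ x, x ∉ Set.Ioo a b → κ x = 0)
    (hκint : ∫ x in a..b, κ x = 1)
    (hκbd : ∀ x > (0:ℝ), κ x ≤ 2 / (ℓ * x))
    (f : ℝ → ℝ)
    (hf : ∀ z, f z = ∫ y in (0:ℝ)..|z|, ∫ x in (0:ℝ)..y, κ x)
    (h : ℝ → ℝ) (hmono : Monotone fun x => x + h x)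
    (x y : ℝ) (hxy : x ≠ y) :
    f (x - y + (h x - h y)) - f (x - y) - deriv f (x - y) * (h x - h y) ≤
        (2 / ℓ) * ∫ u in (0:ℝ)..1, (h x - h y) ^ 2 * (1 - u) / |x - y + u * (h x - h y)| ∧
      (2 / ℓ) * (∫ u in (0:ℝ)..1, (h x - h y) ^ 2 * (1 - u) / |x - y + u * (h x - h y)|) ≤
        2 * (h x - h y) ^ 2 / (ℓ * |x - y|) := by
  set z := x - y with hz
  set l := h x - h y with hl
  have hzne : z ≠ 0 := sub_ne_zero.mpr hxy
  set K : ℝ → ℝ := fun s => κ |s| with hK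
  have hKc : Continuous K := hκc.comp continuous_abs
  set G : ℝ → ℝ := fun t => ∫ s in (0:ℝ)..t, K s with hG
  have hGderiv : ∀ t : ℝ, HasDerivAt G (K t) t := fun t =>
    intervalIntegral.integral_hasDerivAt_right (hKc.intervalIntegrable _ _)
      (hKc.stronglyMeasurableAtFilter _ _) hKc.continuousAt
  have hGc : Continuous G :=
    continuous_iff_continuousAt.mpr fun t => (hGderiv t).continuousAt
  -- G is even as a primitive of an even function... in fact H z := ∫_0^z G is even
  have hHeven : ∀ w : ℝ, (∫ s in (0:ℝ)..w, G s) = ∫ s in (0:ℝ)..(-w), G s := by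
    intro w
    have hGodd : ∀ t : ℝ, G (-t) = -G t := by
      intro t
      have h1 : (∫ s in t..(0:ℝ), K (-s)) = ∫ s in (0:ℝ)..(-t), K s := by
        simpa using intervalIntegral.integral_comp_neg (a := t) (b := 0) (f := K)
      have h2 : (∫ s in t..(0:ℝ), K (-s)) = ∫ s in t..(0:ℝ), K s := by
        apply intervalIntegral.integral_congr
        intro s _
        simp [hK, abs_neg]
      rw [hG]
      simp only
      rw [← h1, h2, intervalIntegral.integral_symm]
    have h3 : (∫ s in (-w)..(0:ℝ), G (-s)) = ∫ s in (0:ℝ)..w, G s := by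
      simpa using intervalIntegral.integral_comp_neg (a := -w) (b := 0) (f := G)
    have h4 : (∫ s in (-w)..(0:ℝ), G (-s)) = ∫ s in (-w)..(0:ℝ), -G s := by
      apply intervalIntegral.integral_congr
      intro s _
      exact hGodd s
    rw [← h3, h4, intervalIntegral.integral_neg, intervalIntegral.integral_symm]
    simp
  have hGeq : ∀ t : ℝ, 0 ≤ t → G t = ∫ s in (0:ℝ)..t, κ s := by
    intro t ht
    apply intervalIntegral.integral_congr
    intro s hs
    rw [Set.uIcc_of_le ht] at hs
    simp [hK, abs_of_nonneg hs.1]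
  have hfH : ∀ w : ℝ, f w = ∫ s in (0:ℝ)..w, G s := by
    intro w
    rw [hf w]
    have habs : (∫ s in (0:ℝ)..|w|, G s) = ∫ s in (0:ℝ)..|w|, ∫ t in (0:ℝ)..s, κ t := by
      apply intervalIntegral.integral_congr
      intro s hs
      rw [Set.uIcc_of_le (abs_nonneg w)] at hs
      exact hGeq s hs.1
    rcases le_or_gt 0 w with hw | hw
    · rw [abs_of_nonneg hw] at habs; rw [abs_of_nonneg hw, ← habs]
    · rw [abs_of_neg hw] at habs; rw [abs_of_neg hw, ← habs, hHeven w]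
  have hfd : ∀ w : ℝ, HasDerivAt f (G w) w := by
    intro w
    have hfe : f = fun w => ∫ s in (0:ℝ)..w, G s := funext hfH
    rw [hfe]
    exact intervalIntegral.integral_hasDerivAt_right (hGc.intervalIntegrable _ _)
      (hGc.stronglyMeasurableAtFilter _ _) hGc.continuousAt
  have hderivf : deriv f z = G z := (hfd z).deriv
  -- Taylor with integral remainder
  set φ : ℝ → ℝ := fun u => f (z + u * l) + (1 - u) * l * G (z + u * l) with hφ
  have hφd : ∀ u : ℝ, HasDerivAt φ ((1 - u) * l ^ 2 * K (z + u * l)) u := by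
    intro u
    have hlin : HasDerivAt (fun u : ℝ => z + u * l) l u := by
      simpa using ((hasDerivAt_id u).mul_const l).const_add z
    have h1 : HasDerivAt (fun u : ℝ => f (z + u * l)) (G (z + u * l) * l) u :=
      (hfd _).comp u hlin
    have h2 : HasDerivAt (fun u : ℝ => G (z + u * l)) (K (z + u * l) * l) u :=
      (hGderiv _).comp u hlin
    have h3 : HasDerivAt (fun u : ℝ => (1 - u) * l) (-1 * l) u :=
      ((hasDerivAt_id u).const_sub 1).mul_const l
    have h4 : HasDerivAt (fun u => (1 - u) * l * G (z + u * l)) _ u := h3.mul h2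
    have h5 : HasDerivAt (fun u => f (z + u * l) + (1 - u) * l * G (z + u * l)) _ u := h1.add h4
    convert h5 using 1
    ring
  have hKint : IntervalIntegrable (fun u => (1 - u) * l ^ 2 * K (z + u * l)) volume 0 1 := by
    apply Continuous.intervalIntegrable
    exact ((continuous_const.sub continuous_id).mul continuous_const).mul
      (hKc.comp (continuous_const.add (continuous_id.mul continuous_const)))
  have hTaylor : (∫ u in (0:ℝ)..1, (1 - u) * l ^ 2 * K (z + u * l)) =
      f (z + l) - f z - G z * l := by
    have heq := intervalIntegral.integral_eq_sub_of_hasDerivAt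
      (f := φ) (f' := fun u => (1 - u) * l ^ 2 * K (z + u * l))
      (fun t _ => hφd t) hKint
    rw [heq, hφ]
    simp only
    ring_nf
  -- sign control
  have hsign : ∀ u ∈ Set.Icc (0:ℝ) 1, (1 - u) * |z| ≤ |z + u * l| := by
    intro u hu
    obtain ⟨hu0, hu1⟩ := hu
    rcases hzne.lt_or_gt with hzlt | hzlt
    · have hxley : x ≤ y := by
        by_contra hc
        push_neg at hc
        have : 0 < z := by rw [hz]; linarith
        linarith
      have hd : z + l ≤ 0 := by
        have := hmono hxley
        simp only at this
        rw [hz, hl]; linarith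
      have h1 : z + u * l ≤ 0 := by nlinarith
      rw [abs_of_neg hzlt, abs_of_nonpos h1]
      nlinarith
    · have hylex : y ≤ x := by
        by_contra hc
        push_neg at hc
        have : z < 0 := by rw [hz]; linarith
        linarith
      have hd : 0 ≤ z + l := by
        have := hmono hylex
        simp only at this
        rw [hz, hl]; linarith
      have h1 : 0 ≤ z + u * l := by nlinarith
      rw [abs_of_pos hzlt, abs_of_nonneg h1]
      nlinarith
  -- bound on K
  have hKbd : ∀ w : ℝ, K w ≤ 2 / (ℓ * |w|) := by
    intro w
    rcases (abs_nonneg w).lt_or_eq with hw | hw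
    · exact hκbd _ hw
    · have hκ00 : κ 0 = 0 := hκsupp 0 (by simp [Set.mem_Ioo]; intro hc; linarith)
      rw [hK]; simp only
      rw [← hw, hκ00]
      simp
  -- the comparison integrand
  set r : ℝ → ℝ := fun u => l ^ 2 * (1 - u) / |z + u * l| with hr
  have hr0 : ∀ u ∈ Set.Icc (0:ℝ) 1, 0 ≤ r u := by
    intro u hu
    apply div_nonneg _ (abs_nonneg _)
    nlinarith [hu.1, hu.2, sq_nonneg l]
  have hrbd : ∀ u ∈ Set.Icc (0:ℝ) 1, r u ≤ l ^ 2 / |z| := by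
    intro u hu
    rcases eq_or_lt_of_le hu.2 with h1 | h1
    · rw [hr]; simp only [← h1]
      simp
      positivity
    · have hpos : 0 < (1 - u) * |z| := mul_pos (by linarith) (abs_pos.mpr hzne)
      have hle := hsign u hu
      have hnum : 0 ≤ l ^ 2 * (1 - u) := by nlinarith [sq_nonneg l]
      have step1 : r u ≤ l ^ 2 * (1 - u) / ((1 - u) * |z|) :=
        div_le_div_of_nonneg_left hnum hpos hle
      have step2 : l ^ 2 * (1 - u) / ((1 - u) * |z|) = l ^ 2 / |z| := by
        rw [mul_comm (l ^ 2) (1 - u), mul_div_mul_left _ _ (by linarith : (1:ℝ) - u ≠ 0)]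
      rw [step2] at step1
      exact step1
  have hrmeas : Measurable r := by
    apply Measurable.div
    · exact (measurable_const.mul (measurable_const.sub measurable_id))
    · exact (measurable_const.add (measurable_id.mul measurable_const)).abs
  have hrint : IntervalIntegrable r volume 0 1 := by
    rw [intervalIntegrable_iff_integrableOn_Icc_of_le (by norm_num : (0:ℝ) ≤ 1)]
    apply MeasureTheory.Integrable.mono' (integrable_const (l ^ 2 / |z|))
      hrmeas.aestronglyMeasurable
    filter_upwards [ae_restrict_mem measurableSet_Icc] with u hu
    rw [Real.norm_eq_abs, abs_of_nonneg (hr0 u hu)]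
    exact hrbd u hu
  -- pointwise bound for the first inequality
  have hpt1 : ∀ u ∈ Set.Icc (0:ℝ) 1,
      (1 - u) * l ^ 2 * K (z + u * l) ≤ (2 / ℓ) * r u := by
    intro u hu
    have hc : 0 ≤ (1 - u) * l ^ 2 := by nlinarith [hu.1, hu.2, sq_nonneg l]
    have := mul_le_mul_of_nonneg_left (hKbd (z + u * l)) hc
    calc (1 - u) * l ^ 2 * K (z + u * l)
        ≤ (1 - u) * l ^ 2 * (2 / (ℓ * |z + u * l|)) := this
      _ = (2 / ℓ) * r u := by
          rw [hr]
          simp only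
          rw [div_mul_div_comm, mul_div_assoc]
          rw [mul_comm ℓ |z + u * l|, ← div_div]
          ring_nf
  constructor
  · rw [hderivf, show f (z + l) - f z - G z * l =
      ∫ u in (0:ℝ)..1, (1 - u) * l ^ 2 * K (z + u * l) from hTaylor.symm,
      ← intervalIntegral.integral_const_mul]
    exact intervalIntegral.integral_mono_on (by norm_num) hKint (hrint.const_mul _) hpt1
  · have h2 : (∫ u in (0:ℝ)..1, r u) ≤ l ^ 2 / |z| := by
      calc (∫ u in (0:ℝ)..1, r u) ≤ ∫ _u in (0:ℝ)..1, l ^ 2 / |z| :=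
            intervalIntegral.integral_mono_on (by norm_num) hrint
              intervalIntegrable_const hrbd
        _ = l ^ 2 / |z| := by simp
    have h3 := mul_le_mul_of_nonneg_left h2 (by positivity : (0:ℝ) ≤ 2 / ℓ)
    calc (2 / ℓ) * ∫ u in (0:ℝ)..1, l ^ 2 * (1 - u) / |z + u * l| ≤ (2 / ℓ) * (l ^ 2 / |z|) := h3
      _ = 2 * l ^ 2 / (ℓ * |z|) := by rw [div_mul_div_comm]
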